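/- Let X be a compact, locally connected Hausdorff space and P a monic polynomial over C(X). If for every ε > 0 there exists an ε-approximate root of P, then P has an exact root in C(X). -/

import Mathlib

open Polynomial Metric Set Filter Topology

lemma root_prox {n : ℕ} {p : ℂ[X]} (hm : p.Monic) (hdeg : p.natDegree = n)
    {r : ℝ} (hr : 0 < r) {v : ℂ} (hv : ‖p.eval v‖ < r ^ n) :
    ∃ w ∈ p.roots, dist v w < r := by
  by_contra h
  push_neg at h
  have hs : Splits p := IsAlgClosed.splits p
  have hcard : p.roots.card = n := by
    rw [← hdeg]; exact (splits_iff_card_roots).mp hs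
  have hev : p.eval v = ((p.roots.map fun w => v - w)).prod := by
    rw [hs.eval_eq_prod_roots, hm.leadingCoeff, one_mul]
  have hnorm : ‖p.eval v‖ = ((p.roots.map fun w => ‖v - w‖)).prod := by
    rw [hev, show (fun w : ℂ => ‖v - w‖) = (normHom : ℂ →*₀ ℝ) ∘ (fun w => v - w) from rfl,
      ← Multiset.map_map, ← map_multiset_prod (normHom : ℂ →*₀ ℝ)]
    rfl
  have hle : r ^ n ≤ ‖p.eval v‖ := by
    rw [hnorm]
    calc r ^ n = ((p.roots.map fun _ => r)).prod := by
          rw [Multiset.map_const', Multiset.prod_replicate, hcard]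
      _ ≤ _ := by
          apply Multiset.prod_map_le_prod_map₀
          · intro i _; exact hr.le
          · intro w hw
            have := h w hw
            rwa [dist_eq_norm] at this
  exact absurd hv (not_lt.mpr hle)

lemma chain_bound {S : Finset ℂ} {r : ℝ} (hr : 0 < r) {C : Set ℂ}
    (hC : IsPreconnected C) (hCS : C ⊆ ⋃ s ∈ S, ball s r)
    {z0 z : ℂ} (hz0 : z0 ∈ C) (hz : z ∈ C) :
    dist z z0 ≤ 4 * r * S.card := by
  by_contra h
  push_neg at h
  set m := dist z z0 with hm
  -- image of distance function is ord-connected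
  have hD : IsPreconnected ((fun w => dist w z0) '' C) :=
    hC.image _ (Continuous.continuousOn (by fun_prop))
  have hIcc : Icc 0 m ⊆ (fun w => dist w z0) '' C := by
    apply hD.ordConnected.out
    · exact ⟨z0, hz0, dist_self z0⟩
    · exact ⟨z, hz, rfl⟩
  -- for each j ≤ S.card, pick a point at distance 4*r*j and a center near it
  have key : ∀ j : Fin (S.card + 1), ∃ s ∈ S, |dist s z0 - 4 * r * (j : ℕ)| < r := by
    intro j
    have hj : (j : ℕ) < S.card + 1 := j.2
    have hjle : (4 : ℝ) * r * (j : ℕ) ≤ m := by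
      calc (4:ℝ) * r * (j : ℕ) ≤ 4 * r * S.card := by
            apply mul_le_mul_of_nonneg_left _ (by positivity)
            exact_mod_cast Nat.lt_succ_iff.mp hj
        _ ≤ m := h.le
    obtain ⟨w, hwC, hw⟩ := hIcc ⟨by positivity, hjle⟩
    simp only [] at hw
    obtain ⟨s, hsS, hws⟩ := by
      have := hCS hwC
      simpa using this
    refine ⟨s, hsS, ?_⟩
    rw [abs_sub_lt_iff]
    constructor
    · have h1 : dist s z0 ≤ dist s w + dist w z0 := dist_triangle s w z0
      simp only [hw] at h1
      rw [dist_comm] at hws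
      linarith
    · have h1 : dist w z0 ≤ dist w s + dist s z0 := dist_triangle w s z0
      simp only [hw] at h1
      linarith
  choose g hgS hg using key
  have hinj : Function.Injective g := by
    intro i j hij
    by_contra hne
    have hne' : (i : ℕ) ≠ (j : ℕ) := fun hc => hne (Fin.ext hc)
    wlog hlt : (i : ℕ) < (j : ℕ) generalizing i j
    · exact this hij.symm (Ne.symm hne) (Ne.symm hne') (by omega)
    have hi' := hg i
    have hj' := hg j
    rw [hij] at hi'
    have hstep : (4:ℝ) * r * (j:ℕ) - 4 * r * (i:ℕ) < 2 * r := by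
      rw [abs_sub_lt_iff] at hi' hj'
      linarith [hi'.1, hi'.2, hj'.1, hj'.2]
    have h2 : (4:ℝ) * r ≤ 4 * r * (j:ℕ) - 4 * r * (i:ℕ) := by
      have : ((i:ℕ) : ℝ) + 1 ≤ ((j:ℕ) : ℝ) := by exact_mod_cast hlt
      nlinarith
    linarith
  have : Fintype.card (Fin (S.card + 1)) ≤ Fintype.card S :=
    Fintype.card_le_of_injective (fun j => (⟨g j, hgS j⟩ : S))
      (fun i j hij => hinj (by simpa using congrArg Subtype.val hij))
  simp at this

lemma poly_facts {n : ℕ} (hn : 0 < n) (c : Fin n → ℂ) :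
    (X ^ n + ∑ i : Fin n, C (c i) * X ^ (i : ℕ)).Monic ∧
    (X ^ n + ∑ i : Fin n, C (c i) * X ^ (i : ℕ)).natDegree = n ∧
    ∀ z : ℂ, (X ^ n + ∑ i : Fin n, C (c i) * X ^ (i : ℕ)).eval z
      = z ^ n + ∑ i : Fin n, c i * z ^ (i : ℕ) := by
  have hdeg : (∑ i : Fin n, C (c i) * X ^ (i : ℕ) : ℂ[X]).degree < (n : ℕ) := by
    apply lt_of_le_of_lt (degree_sum_le _ _)
    rw [Finset.sup_lt_iff (by exact_mod_cast WithBot.bot_lt_coe n)]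
    intro i _
    exact lt_of_le_of_lt (degree_C_mul_X_pow_le _ _) (by exact_mod_cast i.2)
  have hm : (X ^ n + ∑ i : Fin n, C (c i) * X ^ (i : ℕ) : ℂ[X]).Monic :=
    monic_X_pow_add hdeg
  refine ⟨hm, ?_, ?_⟩
  · have : (X ^ n + ∑ i : Fin n, C (c i) * X ^ (i : ℕ) : ℂ[X]).degree = n := by
      rw [add_comm, degree_add_eq_right_of_degree_lt (by rwa [degree_X_pow]),
        degree_X_pow]
    exact natDegree_eq_of_degree_eq_some this
  · intro z
    simp [eval_finset_sum]

/-- Stability over locally connected compacta: if `X` is compact Hausdorff and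
locally connected and the monic polynomial `P(x,z) = z^n + ∑ aᵢ(x) zⁱ` over
`C(X)` has `ε`-approximate roots for every `ε > 0`, then it has an exact
continuous root. -/
theorem stmt5 {X : Type*} [TopologicalSpace X] [CompactSpace X] [T2Space X]
    [LocallyConnectedSpace X]
    (n : ℕ) (hn : 0 < n) (a : Fin n → C(X, ℂ))
    (happrox : ∀ ε > 0, ∃ f : C(X, ℂ),
      ∀ x : X, ‖(f x) ^ n + ∑ i : Fin n, a i x * (f x) ^ (i : ℕ)‖ < ε) :
    ∃ f : C(X, ℂ), ∀ x : X, (f x) ^ n + ∑ i : Fin n, a i x * (f x) ^ (i : ℕ) = 0 := by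
  classical
  set Q : X → ℂ → ℂ := fun x z => z ^ n + ∑ i : Fin n, a i x * z ^ (i : ℕ) with hQ
  -- choose approximate roots
  have hchoice : ∀ k : ℕ, ∃ f : C(X, ℂ), ∀ x, ‖Q x (f x)‖ < 1 / (k + 1) := by
    intro k
    exact happrox (1 / (k + 1)) (by positivity)
  choose f hf using hchoice
  -- uniform bound
  set M : ℝ := 1 + ∑ i : Fin n, ‖a i‖ with hM
  have hM1 : (1 : ℝ) ≤ M := by
    have : (0:ℝ) ≤ ∑ i : Fin n, ‖a i‖ :=
      Finset.sum_nonneg fun i _ => norm_nonneg _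
    linarith
  have hM0 : (0 : ℝ) < M := by linarith
  have hbound : ∀ k x, ‖f k x‖ ≤ M := by
    intro k x
    by_contra hc
    push_neg at hc
    set z := f k x with hz
    set t := ‖z‖ with ht
    have ht1 : (1:ℝ) ≤ t := le_trans hM1 hc.le
    have hsum : ‖∑ i : Fin n, a i x * z ^ (i : ℕ)‖ ≤ (∑ i : Fin n, ‖a i‖) * t ^ (n - 1) := by
      calc ‖∑ i : Fin n, a i x * z ^ (i : ℕ)‖
          ≤ ∑ i : Fin n, ‖a i x * z ^ (i : ℕ)‖ := norm_sum_le _ _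
        _ ≤ ∑ i : Fin n, ‖a i‖ * t ^ (n - 1) := by
            apply Finset.sum_le_sum
            intro i _
            rw [norm_mul, norm_pow]
            apply mul_le_mul ((a i).norm_coe_le_norm x)
              (pow_le_pow_right₀ ht1 (by omega)) (by positivity) (norm_nonneg _)
        _ = (∑ i : Fin n, ‖a i‖) * t ^ (n - 1) := by rw [Finset.sum_mul]
    have hQlow : 1 < ‖Q x z‖ := by
      have h1 : ‖z ^ n‖ - ‖∑ i : Fin n, a i x * z ^ (i : ℕ)‖ ≤ ‖Q x z‖ := by
        have heq : z ^ n = Q x z - ∑ i : Fin n, a i x * z ^ (i : ℕ) := by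
          simp only [hQ]; ring
        have h2 : ‖z ^ n‖ ≤ ‖Q x z‖ + ‖∑ i : Fin n, a i x * z ^ (i : ℕ)‖ := by
          rw [heq]; exact norm_sub_le _ _
        linarith
      have h2 : ‖z ^ n‖ = t ^ (n-1) * t := by
        rw [norm_pow, ← pow_succ]
        congr 1
        omega
      have h3 : (∑ i : Fin n, ‖a i‖) * t ^ (n - 1) = t ^ (n-1) * (M - 1) := by
        rw [hM]; ring
      have h4 : (1:ℝ) ≤ t ^ (n-1) := one_le_pow₀ ht1
      nlinarith [hsum, h1]
    have := hf k x
    have hlt : ‖Q x z‖ < 1 := lt_of_lt_of_le this (by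
      rw [div_le_one (by positivity)]
      have : (0:ℝ) ≤ (k:ℝ) := Nat.cast_nonneg k
      linarith)
    linarith
  -- equicontinuity
  have equi : ∀ x0 : X, ∀ δ > (0:ℝ), ∃ U ∈ 𝓝 x0, ∃ K : ℕ,
      ∀ k ≥ K, ∀ x ∈ U, dist (f k x) (f k x0) ≤ δ := by
    intro x0 δ hδ
    set r : ℝ := δ / (4 * n) with hr
    have hr0 : 0 < r := by
      apply div_pos hδ
      positivity
    obtain ⟨hm0, hdeg0, hev0⟩ := poly_facts hn (fun i => a i x0)
    set p0 : ℂ[X] := Polynomial.X ^ n + ∑ i : Fin n, C (a i x0) * Polynomial.X ^ (i : ℕ) with hp0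
    set S : Finset ℂ := p0.roots.toFinset with hS
    have hcardS : (S.card : ℝ) ≤ n := by
      have h1 : S.card ≤ Multiset.card p0.roots := p0.roots.toFinset_card_le
      have h2 : Multiset.card p0.roots ≤ p0.natDegree := card_roots' p0
      exact_mod_cast le_trans h1 (h2.trans_eq hdeg0)
    set Cm : ℝ := ∑ i : Fin n, M ^ (i : ℕ) with hCm
    have hCm0 : 0 ≤ Cm := Finset.sum_nonneg fun i _ => by positivity
    set η : ℝ := r ^ n / (2 * (Cm + 1)) with hη
    have hη0 : 0 < η := by positivity
    have hηC : η * Cm ≤ r ^ n / 2 := by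
      rw [hη, div_mul_eq_mul_div, div_le_div_iff₀ (by positivity) (by norm_num)]
      nlinarith [pow_pos hr0 n]
    -- coefficient closeness neighborhood
    have hU1 : ∀ᶠ x in 𝓝 x0, ∀ i : Fin n, ‖a i x - a i x0‖ < η := by
      rw [eventually_all]
      intro i
      have : ContinuousAt (fun x => ‖a i x - a i x0‖) x0 := by fun_prop
      have h0 : ‖a i x0 - a i x0‖ < η := by simpa using hη0
      exact this.eventually_lt continuousAt_const (by simpa using hη0)
    obtain ⟨V, hV, hVpre, hVsub⟩ :=
      locallyConnectedSpace_iff_connected_subsets.mp ‹_› x0 _ hU1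
    -- choose K
    obtain ⟨K, hK⟩ := exists_nat_gt (2 / r ^ n)
    refine ⟨V, hV, K, ?_⟩
    intro k hk x hx
    have hrn : (0:ℝ) < r ^ n := pow_pos hr0 n
    have hinv : (1:ℝ) / (k + 1) ≤ r ^ n / 2 := by
      have hk1 : (2:ℝ) / r ^ n < (k:ℝ) + 1 := by
        have : (K:ℝ) ≤ k := Nat.cast_le.mpr hk
        linarith
      rw [div_le_div_iff₀ (by positivity) (by norm_num)]
      rw [div_lt_iff₀ hrn] at hk1
      nlinarith
    -- key: for all y in V, f k y is near a root of p0
    have hnear : ∀ y ∈ V, f k y ∈ ⋃ s ∈ S, ball s r := by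
      intro y hy
      have hQy : ‖Q y (f k y)‖ < 1 / (k + 1) := hf k y
      have hdiffsum : ‖Q x0 (f k y) - Q y (f k y)‖ ≤ r ^ n / 2 := by
        have hQeq : Q x0 (f k y) - Q y (f k y)
            = ∑ i : Fin n, (a i x0 - a i y) * (f k y) ^ (i : ℕ) := by
          have h0 : Q x0 (f k y) - Q y (f k y)
              = (∑ i : Fin n, a i x0 * (f k y) ^ (i : ℕ))
                - ∑ i : Fin n, a i y * (f k y) ^ (i : ℕ) := by
            simp only [hQ]; ring
          rw [h0, ← Finset.sum_sub_distrib]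
          apply Finset.sum_congr rfl
          intro i _
          ring
        rw [hQeq]
        calc ‖∑ i : Fin n, (a i x0 - a i y) * (f k y) ^ (i : ℕ)‖
            ≤ ∑ i : Fin n, ‖(a i x0 - a i y) * (f k y) ^ (i : ℕ)‖ := norm_sum_le _ _
          _ ≤ ∑ i : Fin n, η * M ^ (i : ℕ) := by
              apply Finset.sum_le_sum
              intro i _
              rw [norm_mul, norm_pow]
              have h1 : ‖a i x0 - a i y‖ ≤ η := by
                have := (hVsub hy) i
                rw [norm_sub_rev] at this
                exact this.le
              exact mul_le_mul h1 (pow_le_pow_left₀ (norm_nonneg _) (hbound k y) _)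
                (by positivity) hη0.le
          _ = η * Cm := by rw [← Finset.mul_sum]
          _ ≤ r ^ n / 2 := hηC
      have hQx0 : ‖Q x0 (f k y)‖ < r ^ n := by
        calc ‖Q x0 (f k y)‖ ≤ ‖Q y (f k y)‖ + ‖Q x0 (f k y) - Q y (f k y)‖ := by
              have := norm_add_le (Q y (f k y)) (Q x0 (f k y) - Q y (f k y))
              simpa [add_sub_cancel] using this
          _ < 1 / (k+1) + r ^ n / 2 := by linarith
          _ ≤ r ^ n / 2 + r ^ n / 2 := by linarith
          _ = r ^ n := by ring
      have : ‖p0.eval (f k y)‖ < r ^ n := by rwa [hev0]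
      obtain ⟨w, hw, hdw⟩ := root_prox hm0 hdeg0 hr0 this
      exact mem_biUnion (Multiset.mem_toFinset.mpr hw) (mem_ball.mpr hdw)
    -- apply chain bound on the image
    have himg : IsPreconnected ((f k) '' V) :=
      hVpre.image _ (f k).continuous.continuousOn
    have hsub : (f k) '' V ⊆ ⋃ s ∈ S, ball s r := by
      rintro _ ⟨y, hy, rfl⟩
      exact hnear y hy
    have hx0V : x0 ∈ V := mem_of_mem_nhds hV
    have := chain_bound hr0 himg hsub ⟨x0, hx0V, rfl⟩ ⟨x, hx, rfl⟩
    calc dist (f k x) (f k x0) ≤ 4 * r * S.card := this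
      _ ≤ 4 * r * n := by
          apply mul_le_mul_of_nonneg_left hcardS (by positivity)
      _ = δ := by
          rw [hr]
          field_simp
  -- ultrafilter limit
  set 𝒰 : Ultrafilter ℕ := Ultrafilter.of atTop with h𝒰
  have h𝒰le : (𝒰 : Filter ℕ) ≤ atTop := Ultrafilter.of_le atTop
  have hgx : ∀ x : X, ∃ z ∈ closedBall (0:ℂ) M,
      Tendsto (fun k => f k x) 𝒰 (𝓝 z) := by
    intro x
    have hle : (𝒰.map (fun k => f k x) : Filter ℂ) ≤ 𝓟 (closedBall 0 M) := by
      rw [le_principal_iff]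
      apply mem_map.mpr
      apply univ_mem'
      intro k
      simpa [mem_closedBall, dist_eq_norm] using hbound k x
    obtain ⟨z, hz, hzle⟩ := (isCompact_closedBall (0:ℂ) M).ultrafilter_le_nhds _ hle
    exact ⟨z, hz, hzle⟩
  choose g hgB hg using hgx
  -- continuity of g
  have hgcont : Continuous g := by
    rw [continuous_iff_continuousAt]
    intro x0
    rw [ContinuousAt, Metric.tendsto_nhds]
    intro ε hε
    obtain ⟨U, hU, K, hUK⟩ := equi x0 (ε/2) (by linarith)
    filter_upwards [hU] with x hx
    have hlim : Tendsto (fun k => dist (f k x) (f k x0)) 𝒰 (𝓝 (dist (g x) (g x0))) :=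
      ((hg x).dist (hg x0))
    have hev : ∀ᶠ k in (𝒰 : Filter ℕ), dist (f k x) (f k x0) ≤ ε/2 := by
      apply h𝒰le
      filter_upwards [eventually_ge_atTop K] with k hk
      exact hUK k hk x hx
    have := le_of_tendsto hlim hev
    linarith
  refine ⟨⟨g, hgcont⟩, ?_⟩
  intro x
  have hc : Continuous (Q x) := by
    simp only [hQ]
    fun_prop
  have h1 : Tendsto (fun k => Q x (f k x)) 𝒰 (𝓝 (Q x (g x))) :=
    (hc.tendsto (g x)).comp (hg x)
  have h2 : Tendsto (fun k => Q x (f k x)) 𝒰 (𝓝 0) := by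
    apply Tendsto.mono_left _ h𝒰le
    apply squeeze_zero_norm (fun k => (hf k x).le)
    exact tendsto_one_div_add_atTop_nhds_zero_nat
  exact (tendsto_nhds_unique h1 h2 : Q x (g x) = 0)
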